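/- For all α in (0,1), the derivative with respect to α of the relative entropy D(P_α‖P) (in bits) equals (α−1) σ²_{3,α} · log₂ e, where σ²_{3,α} = Var_{P_α}(ln P(X)). -/

import Mathlib

open Finset

/-- The derivative in `α` of the relative entropy `D(P_α ‖ P)` (in bits)
equals `(α - 1) σ²_{3,α} log₂ e`. -/
theorem deriv_relative_entropy_tilted {A : Type*} [Fintype A] (P : A → ℝ)
    (hpos : ∀ a, 0 < P a) (hsum : ∑ a, P a = 1)
    (α : ℝ) (hα : α ∈ Set.Ioo (0 : ℝ) 1) :
    let Pa : ℝ → A → ℝ := fun b a => P a ^ b / ∑ y, P y ^ b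
    let D : ℝ → ℝ := fun b => ∑ a, Pa b a * Real.logb 2 (Pa b a / P a)
    let m3 : ℝ := ∑ a, Pa α a * Real.log (P a)
    let σ3sq : ℝ := ∑ a, Pa α a * (Real.log (P a) - m3) ^ 2
    HasDerivAt D ((α - 1) * σ3sq * Real.logb 2 (Real.exp 1)) α := by
  intro Pa D m3 σ3sq
  have hne : (Finset.univ : Finset A).Nonempty := by
    by_contra h
    rw [Finset.not_nonempty_iff_eq_empty] at h
    rw [h, Finset.sum_empty] at hsum
    norm_num at hsum
  set Z : ℝ → ℝ := fun b => ∑ y, P y ^ b with hZdef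
  set N : ℝ → ℝ := fun b => ∑ y, P y ^ b * Real.log (P y) with hNdef
  set S : ℝ → ℝ := fun b => ∑ y, P y ^ b * Real.log (P y) ^ 2 with hSdef
  have hZpos : ∀ b, 0 < Z b := fun b =>
    Finset.sum_pos (fun y _ => Real.rpow_pos_of_pos (hpos y) b) hne
  have h2 : Real.log 2 ≠ 0 := ne_of_gt (Real.log_pos (by norm_num))
  -- derivatives of Z and N
  have hZ' : HasDerivAt Z (N α) α := by
    apply HasDerivAt.fun_sum
    intro y _
    exact (Real.hasStrictDerivAt_const_rpow (hpos y) α).hasDerivAt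
  have hN' : HasDerivAt N (S α) α := by
    have : S α = ∑ y, (P y ^ α * Real.log (P y)) * Real.log (P y) := by
      simp [hSdef, sq, mul_assoc]
    rw [this]
    apply HasDerivAt.fun_sum
    intro y _
    exact ((Real.hasStrictDerivAt_const_rpow (hpos y) α).hasDerivAt).mul_const _
  -- G equals D
  set G : ℝ → ℝ := fun b => ((b - 1) * (N b / Z b) - Real.log (Z b)) / Real.log 2
    with hGdef
  have hDG : D = G := by
    funext b
    have hlog : ∀ a : A, Real.log (P a ^ b / Z b / P a)
        = (b - 1) * Real.log (P a) - Real.log (Z b) := by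
      intro a
      rw [Real.log_div (div_pos (Real.rpow_pos_of_pos (hpos a) b) (hZpos b)).ne'
          (hpos a).ne',
        Real.log_div (Real.rpow_pos_of_pos (hpos a) b).ne' (hZpos b).ne',
        Real.log_rpow (hpos a)]
      ring
    have step : ∀ a : A, Pa b a * Real.logb 2 (Pa b a / P a)
        = ((b - 1) * (P a ^ b * Real.log (P a)) - Real.log (Z b) * P a ^ b)
            / (Z b * Real.log 2) := by
      intro a
      show P a ^ b / Z b * Real.logb 2 (P a ^ b / Z b / P a) = _
      simp only [Real.logb, hlog a]
      have hzb := (hZpos b).ne'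
      field_simp
    simp only [D, G]
    rw [Finset.sum_congr rfl (fun a _ => step a), ← Finset.sum_div,
      Finset.sum_sub_distrib, ← Finset.mul_sum, ← Finset.mul_sum]
    have hzb := (hZpos b).ne'
    simp only [hNdef, hZdef]
    have hzb' : (∑ y, P y ^ b) ≠ 0 := hzb
    field_simp
  -- derivative of G
  have hId : HasDerivAt (fun b : ℝ => b - 1) 1 α := (hasDerivAt_id α).sub_const 1
  have hRatio : HasDerivAt (fun b => N b / Z b)
      ((S α * Z α - N α * N α) / Z α ^ 2) α := hN'.div hZ' (hZpos α).ne'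
  have hLog : HasDerivAt (fun b => Real.log (Z b)) (N α / Z α) α :=
    hZ'.log (hZpos α).ne'
  have hG' : HasDerivAt G
      ((1 * (N α / Z α) + (α - 1) * ((S α * Z α - N α * N α) / Z α ^ 2)
        - N α / Z α) / Real.log 2) α :=
    ((hId.mul hRatio).sub hLog).div_const _
  rw [hDG]
  -- identify the value
  have hm3 : m3 = N α / Z α := by
    simp only [m3, Pa, hNdef, hZdef, div_mul_eq_mul_div]
    rw [← Finset.sum_div]
  have hsum1 : ∑ a, Pa α a = 1 := by
    simp only [Pa, hZdef]
    rw [← Finset.sum_div]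
    exact div_self (hZpos α).ne'
  have hS : ∑ a, Pa α a * Real.log (P a) ^ 2 = S α / Z α := by
    simp only [Pa, hSdef, hZdef, div_mul_eq_mul_div]
    rw [← Finset.sum_div]
  have hσ : σ3sq = S α / Z α - m3 ^ 2 := by
    have expand : ∀ a : A, Pa α a * (Real.log (P a) - m3) ^ 2
        = Pa α a * Real.log (P a) ^ 2
          - 2 * m3 * (Pa α a * Real.log (P a)) + m3 ^ 2 * Pa α a := by
      intro a; ring
    simp only [σ3sq]
    rw [Finset.sum_congr rfl (fun a _ => expand a), Finset.sum_add_distrib,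
      Finset.sum_sub_distrib, ← Finset.mul_sum, ← Finset.mul_sum, hS, hsum1]
    show S α / Z α - 2 * m3 * m3 + m3 ^ 2 * 1 = _
    ring
  have hle : Real.logb 2 (Real.exp 1) = 1 / Real.log 2 := by
    simp [Real.logb, Real.log_exp]
  convert hG' using 1
  rw [hσ, hm3, hle]
  have hzα := (hZpos α).ne'
  field_simp
  ring
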